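/- Fix reals 1 = σ_1 ≥ σ_2 ≥ … ≥ σ_d > 0, set S_d := ∏_{i=1}^d (−σ_i, σ_i], B_0 := S_d and, for n ≥ 1, B_n := ∏_{i=1}^d (−2^n σ_i, 2^n σ_i] ∖ ∏_{i=1}^d (−2^{n−1} σ_i, 2^{n−1} σ_i]. Let μ and ν be probability measures on ℝ^d, set q := Σ_{n≥0} (μ(B_n) − ν(B_n))_+ and assume q > 0; define α := Σ_{n≥0} (μ(B_n) − ν(B_n))_+ · μ|_{B_n}/μ(B_n) and β := Σ_{n≥0} (ν(B_n) − μ(B_n))_+ · ν|_{B_n}/ν(B_n). Then (1/q) ∫∫ ‖x − y‖² α(dx) β(dy) ≤ 2d Σ_{n≥0} 2^{2n} | μ(B_n) − ν(B_n) |. -/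

import Mathlib

open MeasureTheory ProbabilityTheory Real
open scoped ENNReal NNReal BigOperators

/-- Squared Wasserstein-2 distance: infimum over couplings of `∫ ‖x - y‖²`. -/
noncomputable def W2sq {E : Type*} [NormedAddCommGroup E] [MeasurableSpace E]
    (μ ν : Measure E) : ℝ :=
  sInf { r : ℝ | ∃ γ : Measure (E × E), IsProbabilityMeasure γ ∧
    γ.map Prod.fst = μ ∧ γ.map Prod.snd = ν ∧ r = ∫ p, ‖p.1 - p.2‖ ^ 2 ∂γ }

/-- Empirical measure of `N` points. -/
noncomputable def empMeasure {E : Type*} [MeasurableSpace E] {N : ℕ}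
    (y : Fin N → E) : Measure E :=
  ((N : ℝ≥0∞))⁻¹ • ∑ i, Measure.dirac (y i)

/-- Sixth-moment scale of the `i`-th coordinate: `σ_i = (∫ y_i^6 dμ)^{1/6}`. -/
noncomputable def sigma6 {d : ℕ} (μ : Measure (EuclideanSpace ℝ (Fin d))) (i : Fin d) : ℝ :=
  (∫ y, y i ^ 6 ∂μ) ^ ((1 : ℝ) / 6)

/-- `M = (∫ Σ_i y_i^6 dμ)^{1/6}`. -/
noncomputable def sixthM {d : ℕ} (μ : Measure (EuclideanSpace ℝ (Fin d))) : ℝ :=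
  (∫ y, ∑ i, y i ^ 6 ∂μ) ^ ((1 : ℝ) / 6)

/-- The box `∏_i (-c σ_i, c σ_i]`. -/
def box {d : ℕ} (σ : Fin d → ℝ) (c : ℝ) : Set (EuclideanSpace ℝ (Fin d)) :=
  {x | ∀ i, -(c * σ i) < x i ∧ x i ≤ c * σ i}

/-- The annuli `B_0 = S_d`, `B_n = ∏(-2^n σ_i, 2^n σ_i] \ ∏(-2^{n-1} σ_i, 2^{n-1} σ_i]`. -/
def Bset {d : ℕ} (σ : Fin d → ℝ) : ℕ → Set (EuclideanSpace ℝ (Fin d))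
  | 0 => box σ 1
  | n + 1 => box σ (2 ^ (n + 1)) \ box σ (2 ^ n)

/-- `R_{B}μ`: pushforward of the normalized restriction `μ|_B / μ(B)` by `x ↦ 2^{-n} x`. -/
noncomputable def RB {d : ℕ} (μ : Measure (EuclideanSpace ℝ (Fin d)))
    (B : Set (EuclideanSpace ℝ (Fin d))) (n : ℕ) : Measure (EuclideanSpace ℝ (Fin d)) :=
  Measure.map (fun x => ((2 : ℝ) ^ n)⁻¹ • x) ((μ B)⁻¹ • μ.restrict B)

/-- The grid cell `2^{1-ℓ} k + (-2^{-ℓ}, 2^{-ℓ}]^d`, `k ∈ ℤ^d`. -/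
def gridCell (d : ℕ) (ℓ : ℕ) (k : Fin d → ℤ) : Set (EuclideanSpace ℝ (Fin d)) :=
  {x | ∀ i, 2 ^ (1 - (ℓ : ℤ)) * (k i : ℝ) - 2 ^ (-(ℓ : ℤ)) < x i ∧
    x i ≤ 2 ^ (1 - (ℓ : ℤ)) * (k i : ℝ) + 2 ^ (-(ℓ : ℤ))}

/-- `D_2(μ, ν) = (3/2) Σ_{ℓ≥1} 2^{-2ℓ} Σ_{F ∈ 𝒫_ℓ} |μ(F) - ν(F)|`, where `𝒫_ℓ` is the
minimal family of level-`ℓ` grid cells covering `S_d`. -/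
noncomputable def D2dist {d : ℕ} (σ : Fin d → ℝ)
    (μ ν : Measure (EuclideanSpace ℝ (Fin d))) : ℝ :=
  (3 / 2) * ∑' ℓ : ℕ, (2 : ℝ) ^ (-2 * ((ℓ : ℤ) + 1)) *
    ∑' F : {k : Fin d → ℤ // (gridCell d (ℓ + 1) k ∩ box σ 1).Nonempty},
      |(μ (gridCell d (ℓ + 1) F.1)).toReal - (ν (gridCell d (ℓ + 1) F.1)).toReal|

/-- `𝒟_2(μ, ν) = Σ_{n≥0} 2^{2n} [ |μ(B_n) - ν(B_n)| + (μ(B_n) ∧ ν(B_n)) D_2(R_{B_n}μ, R_{B_n}ν) ]`. -/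
noncomputable def Dcal2 {d : ℕ} (σ : Fin d → ℝ)
    (μ ν : Measure (EuclideanSpace ℝ (Fin d))) : ℝ :=
  ∑' n : ℕ, (2 : ℝ) ^ (2 * n) *
    (|(μ (Bset σ n)).toReal - (ν (Bset σ n)).toReal| +
      min (μ (Bset σ n)).toReal (ν (Bset σ n)).toReal *
        D2dist σ (RB μ (Bset σ n) n) (RB ν (Bset σ n) n))

section AuxS
variable {d : ℕ}

lemma abs_coord_le_norm (x : EuclideanSpace ℝ (Fin d)) (i : Fin d) : |x i| ≤ ‖x‖ := by
  rw [EuclideanSpace.norm_eq, ← Real.sqrt_sq_eq_abs]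
  apply Real.sqrt_le_sqrt
  have := Finset.single_le_sum (f := fun j => ‖x j‖ ^ 2) (fun j _ => by positivity)
    (Finset.mem_univ i)
  simpa [Real.norm_eq_abs, sq_abs] using this

lemma measurableSet_box (σ : Fin d → ℝ) (c : ℝ) : MeasurableSet (box σ c) := by
  have : box σ c = ⋂ i, (fun x : EuclideanSpace ℝ (Fin d) => x i) ⁻¹'
      Set.Ioc (-(c * σ i)) (c * σ i) := by
    ext x; simp [box, Set.mem_iInter, Set.mem_Ioc]
  rw [this]
  exact MeasurableSet.iInter fun i => ((measurable_pi_apply i).comp (WithLp.measurable_ofLp 2 _)) measurableSet_Ioc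

lemma measurableSet_Bset (σ : Fin d → ℝ) (n : ℕ) : MeasurableSet (Bset σ n) := by
  cases n with
  | zero => exact measurableSet_box σ 1
  | succ k => exact (measurableSet_box σ _).diff (measurableSet_box σ _)

lemma box_mono (σ : Fin d → ℝ) (hσ : ∀ i, 0 < σ i) {c c' : ℝ} (h : c ≤ c') :
    box σ c ⊆ box σ c' := by
  intro x hx i
  obtain ⟨h1, h2⟩ := hx i
  have hm : c * σ i ≤ c' * σ i := mul_le_mul_of_nonneg_right h (hσ i).le
  exact ⟨lt_of_le_of_lt (by linarith) h1, h2.trans hm⟩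

lemma Bset_subset_box (σ : Fin d → ℝ) (n : ℕ) : Bset σ n ⊆ box σ (2 ^ n) := by
  cases n with
  | zero => simp only [Bset, pow_zero]; exact subset_rfl
  | succ k => exact Set.diff_subset

lemma Bset_disjoint (σ : Fin d → ℝ) (hσ : ∀ i, 0 < σ i) :
    Pairwise (Function.onFun Disjoint (Bset σ)) := by
  have key : ∀ m n, m < n → Disjoint (Bset σ m) (Bset σ n) := by
    intro m n hmn
    obtain ⟨k, rfl⟩ : ∃ k, n = k + 1 := ⟨n - 1, by omega⟩
    refine Set.disjoint_left.mpr fun x hxm hxn => ?_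
    refine hxn.2 (box_mono σ hσ ?_ ((Bset_subset_box σ m) hxm))
    exact pow_le_pow_right₀ (by norm_num) (by omega)
  intro m n hmn
  rcases lt_or_gt_of_ne hmn with h | h
  · exact key m n h
  · exact (key n m h).symm

lemma iUnion_Bset (σ : Fin d → ℝ) (hd : 0 < d) (hσ : ∀ i, 0 < σ i)
    (hσmono : ∀ i j : Fin d, i ≤ j → σ j ≤ σ i) :
    ⋃ n, Bset σ n = Set.univ := by
  classical
  ext x
  simp only [Set.mem_iUnion, Set.mem_univ, iff_true]
  set last : Fin d := ⟨d - 1, by omega⟩ with hlast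
  have hs : 0 < σ last := hσ last
  have hP : ∃ N : ℕ, x ∈ box σ (2 ^ N) := by
    obtain ⟨N, hN⟩ := pow_unbounded_of_one_lt (‖x‖ / σ last) (by norm_num : (1:ℝ) < 2)
    refine ⟨N, fun i => ?_⟩
    have h1 : |x i| ≤ ‖x‖ := abs_coord_le_norm x i
    have h2 : ‖x‖ < 2 ^ N * σ last := by rwa [div_lt_iff₀ hs] at hN
    have h3 : σ last ≤ σ i := hσmono i last (by
      rw [Fin.le_def]; have := i.isLt; simp [hlast]; omega)
    have h4 : (0:ℝ) < 2 ^ N := by positivity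
    have h5 : |x i| < 2 ^ N * σ i := by nlinarith
    have := abs_lt.mp h5
    exact ⟨this.1, this.2.le⟩
  set N0 := Nat.find hP with hN0def
  have hmem : x ∈ box σ (2 ^ N0) := Nat.find_spec hP
  cases hN0 : N0 with
  | zero =>
    refine ⟨0, ?_⟩
    rw [hN0] at hmem
    simpa only [Bset, pow_zero] using hmem
  | succ k =>
    refine ⟨k + 1, ⟨by rw [hN0] at hmem; exact hmem, fun hxk => ?_⟩⟩
    exact Nat.find_min hP (by omega) hxk

lemma norm_sq_le_of_mem_Bset (σ : Fin d → ℝ) (hσ1 : ∀ i, σ i ≤ 1) {n : ℕ}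
    {x : EuclideanSpace ℝ (Fin d)} (hx : x ∈ Bset σ n) : ‖x‖ ^ 2 ≤ d * 4 ^ n := by
  have hx' := Bset_subset_box σ n hx
  have h1 : ∀ i, ‖x i‖ ^ 2 ≤ 4 ^ n := by
    intro i
    obtain ⟨ha, hb⟩ := hx' i
    have hp : (0:ℝ) < 2 ^ n := by positivity
    have h2 : (2:ℝ) ^ n * σ i ≤ 2 ^ n := by nlinarith [hσ1 i]
    have h3 : |x i| ≤ 2 ^ n := abs_le.mpr ⟨by linarith, by linarith⟩
    have h4 : ‖x i‖ ^ 2 = |x i| ^ 2 := by rw [Real.norm_eq_abs]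
    have h5 : (4:ℝ) ^ n = 2 ^ n * 2 ^ n := by rw [← mul_pow]; norm_num
    rw [h4, h5]; nlinarith [abs_nonneg (x i)]
  have hnorm : ‖x‖ ^ 2 = ∑ i, ‖x i‖ ^ 2 := by
    rw [EuclideanSpace.norm_eq, Real.sq_sqrt]; positivity
  rw [hnorm]
  calc ∑ i, ‖x i‖ ^ 2 ≤ ∑ _i : Fin d, (4:ℝ) ^ n := Finset.sum_le_sum fun i _ => h1 i
    _ = d * 4 ^ n := by simp [Finset.sum_const, Finset.card_univ, mul_comm]

lemma norm_sq_ge_of_mem_Bset (σ : Fin d → ℝ) {s : ℝ} (hs : ∀ i, s ≤ σ i) (hs0 : 0 ≤ s)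
    {k : ℕ} {x : EuclideanSpace ℝ (Fin d)} (hx : x ∈ Bset σ (k + 1)) :
    s ^ 2 * 4 ^ k ≤ ‖x‖ ^ 2 := by
  obtain ⟨-, hxk⟩ := hx
  obtain ⟨i, hi⟩ := not_forall.mp hxk
  rw [not_and_or] at hi
  have hp : (0:ℝ) < 2 ^ k := by positivity
  have habs : 2 ^ k * s ≤ |x i| := by
    have hσi : s ≤ σ i := hs i
    rcases hi with h | h
    · push_neg at h
      have : x i ≤ -(2 ^ k * σ i) := h
      have h2 : 2 ^ k * σ i ≤ -(x i) := by linarith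
      calc (2:ℝ) ^ k * s ≤ 2 ^ k * σ i := by nlinarith
        _ ≤ -(x i) := h2
        _ ≤ |x i| := neg_le_abs _
    · push_neg at h
      calc (2:ℝ) ^ k * s ≤ 2 ^ k * σ i := by nlinarith
        _ ≤ x i := h.le
        _ ≤ |x i| := le_abs_self _
  have hxi : |x i| ≤ ‖x‖ := abs_coord_le_norm x i
  have h5 : (4:ℝ) ^ k = 2 ^ k * 2 ^ k := by rw [← mul_pow]; norm_num
  have h6 : (2:ℝ) ^ k * s ≤ ‖x‖ := habs.trans hxi
  have h7 := pow_le_pow_left₀ (mul_nonneg hp.le hs0) h6 2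
  nlinarith [h7]

end AuxS

section AuxM
variable {d : ℕ}

lemma aux_univ (σ : Fin d → ℝ) (μ : Measure (EuclideanSpace ℝ (Fin d)))
    [IsFiniteMeasure μ] (w : ℕ → ℝ≥0∞) (hw : ∀ n, w n ≤ μ (Bset σ n)) :
    (Measure.sum fun n => w n • ((μ (Bset σ n))⁻¹ • μ.restrict (Bset σ n))) Set.univ
      = ∑' n, w n := by
  rw [Measure.sum_apply _ MeasurableSet.univ]
  refine tsum_congr fun n => ?_
  simp only [Measure.smul_apply, smul_eq_mul, Measure.restrict_apply_univ]
  rcases eq_or_ne (μ (Bset σ n)) 0 with h | h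
  · have hw0 : w n = 0 := le_antisymm (h ▸ hw n) zero_le
    simp [hw0]
  · rw [ENNReal.inv_mul_cancel h (measure_ne_top μ _), mul_one]

lemma aux_upper (σ : Fin d → ℝ) (hσ1 : ∀ i, σ i ≤ 1)
    (μ : Measure (EuclideanSpace ℝ (Fin d))) [IsFiniteMeasure μ]
    (w : ℕ → ℝ≥0∞) :
    ∫⁻ x, ENNReal.ofReal (2 * ‖x‖ ^ 2)
        ∂(Measure.sum fun n => w n • ((μ (Bset σ n))⁻¹ • μ.restrict (Bset σ n)))
      ≤ ∑' n, w n * ENNReal.ofReal (2 * d * 4 ^ n) := by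
  rw [lintegral_sum_measure]
  refine ENNReal.tsum_le_tsum fun n => ?_
  rw [lintegral_smul_measure, lintegral_smul_measure]
  have hbd : ∫⁻ x in Bset σ n, ENNReal.ofReal (2 * ‖x‖ ^ 2) ∂μ
      ≤ ENNReal.ofReal (2 * d * 4 ^ n) * μ (Bset σ n) := by
    calc ∫⁻ x in Bset σ n, ENNReal.ofReal (2 * ‖x‖ ^ 2) ∂μ
        ≤ ∫⁻ _x in Bset σ n, ENNReal.ofReal (2 * d * 4 ^ n) ∂μ := by
          refine setLIntegral_mono measurable_const fun x hx => ?_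
          refine ENNReal.ofReal_le_ofReal ?_
          have := norm_sq_le_of_mem_Bset σ hσ1 hx
          linarith
      _ = ENNReal.ofReal (2 * d * 4 ^ n) * μ (Bset σ n) := setLIntegral_const _ _
  calc w n * ((μ (Bset σ n))⁻¹ * ∫⁻ x in Bset σ n, ENNReal.ofReal (2 * ‖x‖ ^ 2) ∂μ)
      ≤ w n * ((μ (Bset σ n))⁻¹ * (ENNReal.ofReal (2 * d * 4 ^ n) * μ (Bset σ n))) := by
        exact mul_le_mul_right (mul_le_mul_right hbd _) _
    _ ≤ w n * ENNReal.ofReal (2 * d * 4 ^ n) := by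
        refine mul_le_mul_right ?_ _
        rw [mul_comm (ENNReal.ofReal _), ← mul_assoc]
        calc (μ (Bset σ n))⁻¹ * μ (Bset σ n) * ENNReal.ofReal (2 * d * 4 ^ n)
            ≤ 1 * ENNReal.ofReal (2 * d * 4 ^ n) :=
              mul_le_mul_left (ENNReal.inv_mul_le_one _) _
          _ = _ := one_mul _

lemma aux_lower (σ : Fin d → ℝ) (hd : 0 < d) (hσpos : ∀ i, 0 < σ i)
    (hσmono : ∀ i j : Fin d, i ≤ j → σ j ≤ σ i)
    (μ : Measure (EuclideanSpace ℝ (Fin d))) [IsFiniteMeasure μ]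
    (w : ℕ → ℝ≥0∞) (hw : ∀ n, w n ≤ μ (Bset σ n)) (hw1 : ∀ n, w n ≠ ∞)
    (hinf : ∑' n, w n * ENNReal.ofReal (2 * d * 4 ^ n) = ∞) :
    ∫⁻ x, ENNReal.ofReal (2 * ‖x‖ ^ 2)
        ∂(Measure.sum fun n => w n • ((μ (Bset σ n))⁻¹ • μ.restrict (Bset σ n))) = ∞ := by
  classical
  set last : Fin d := ⟨d - 1, by omega⟩ with hlast
  set s : ℝ := σ last with hsdef
  have hs0 : 0 < s := hσpos last
  have hsle : ∀ i, s ≤ σ i := fun i => hσmono i last (by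
    rw [Fin.le_def]; have := i.isLt; simp [hlast]; omega)
  -- step 1 : the shifted sum is infinite
  have hshift : ∑' n, w (n + 1) * ENNReal.ofReal (2 * s ^ 2 * 4 ^ n) = ∞ := by
    by_contra hfin
    apply absurd hinf
    rw [tsum_eq_zero_add' ENNReal.summable]
    refine ENNReal.add_ne_top.mpr ⟨ENNReal.mul_ne_top (hw1 0) ENNReal.ofReal_ne_top, ?_⟩
    have hterm : ∀ n : ℕ, w (n + 1) * ENNReal.ofReal (2 * d * 4 ^ (n + 1))
        = (w (n + 1) * ENNReal.ofReal (2 * s ^ 2 * 4 ^ n)) * ENNReal.ofReal (4 * d / s ^ 2) := by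
      intro n
      rw [mul_assoc (w (n + 1)), ← ENNReal.ofReal_mul (by positivity)]
      congr 2
      field_simp
      ring
    calc ∑' n, w (n + 1) * ENNReal.ofReal (2 * d * 4 ^ (n + 1))
        = (∑' n, w (n + 1) * ENNReal.ofReal (2 * s ^ 2 * 4 ^ n)) * ENNReal.ofReal (4 * d / s ^ 2) := by
          rw [← ENNReal.tsum_mul_right]; exact tsum_congr hterm
      _ ≠ ∞ := ENNReal.mul_ne_top hfin ENNReal.ofReal_ne_top
  rw [lintegral_sum_measure]
  refine top_le_iff.mp ?_
  calc (∞ : ℝ≥0∞) = ∑' n, w (n + 1) * ENNReal.ofReal (2 * s ^ 2 * 4 ^ n) := hshift.symm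
    _ ≤ ∑' n, ∫⁻ x, ENNReal.ofReal (2 * ‖x‖ ^ 2)
          ∂(w (n + 1) • ((μ (Bset σ (n + 1)))⁻¹ • μ.restrict (Bset σ (n + 1)))) := by
        refine ENNReal.tsum_le_tsum fun n => ?_
        rw [lintegral_smul_measure, lintegral_smul_measure]
        rcases eq_or_ne (μ (Bset σ (n + 1))) 0 with h0 | h0
        · have hw0 : w (n + 1) = 0 := le_antisymm (h0 ▸ hw (n + 1)) zero_le
          simp [hw0]
        · have hbd : ENNReal.ofReal (2 * s ^ 2 * 4 ^ n) * μ (Bset σ (n + 1))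
              ≤ ∫⁻ x in Bset σ (n + 1), ENNReal.ofReal (2 * ‖x‖ ^ 2) ∂μ := by
            rw [← setLIntegral_const]
            refine setLIntegral_mono ((measurable_norm.pow_const 2).const_mul 2).ennreal_ofReal
              fun x hx => ?_
            refine ENNReal.ofReal_le_ofReal ?_
            have := norm_sq_ge_of_mem_Bset σ hsle hs0.le hx
            linarith
          refine mul_le_mul_right ?_ _
          calc ENNReal.ofReal (2 * s ^ 2 * 4 ^ n)
              = (μ (Bset σ (n + 1)))⁻¹ * (ENNReal.ofReal (2 * s ^ 2 * 4 ^ n) * μ (Bset σ (n + 1))) := by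
                rw [mul_comm (ENNReal.ofReal _), ← mul_assoc,
                  ENNReal.inv_mul_cancel h0 (measure_ne_top μ _), one_mul]
            _ ≤ _ := mul_le_mul_right hbd _
    _ ≤ ∑' n, ∫⁻ x, ENNReal.ofReal (2 * ‖x‖ ^ 2)
          ∂(w n • ((μ (Bset σ n))⁻¹ • μ.restrict (Bset σ n))) :=
        ENNReal.tsum_comp_le_tsum_of_injective (fun a b h => by omega) _

end AuxM

lemma stmt9_aux (d : ℕ) (hd : 0 < d) (σ : Fin d → ℝ)
    (hσ1 : σ ⟨0, hd⟩ = 1) (hσmono : ∀ i j : Fin d, i ≤ j → σ j ≤ σ i)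
    (hσpos : ∀ i, 0 < σ i)
    (μ ν : Measure (EuclideanSpace ℝ (Fin d)))
    [IsProbabilityMeasure μ] [IsProbabilityMeasure ν]
    (q : ℝ≥0∞) (hq : q = ∑' n, (μ (Bset σ n) - ν (Bset σ n))) (hqpos : 0 < q) :
    q.toReal⁻¹ * ∫ p, ‖p.1 - p.2‖ ^ 2 ∂((Measure.sum fun n =>
          (μ (Bset σ n) - ν (Bset σ n)) • ((μ (Bset σ n))⁻¹ • μ.restrict (Bset σ n))).prod
        (Measure.sum fun n =>
          (ν (Bset σ n) - μ (Bset σ n)) • ((ν (Bset σ n))⁻¹ • ν.restrict (Bset σ n)))) ≤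
      2 * d * ∑' n : ℕ, (2 : ℝ) ^ (2 * n) *
        |(μ (Bset σ n)).toReal - (ν (Bset σ n)).toReal| := by
  classical
  have hσle1 : ∀ i, σ i ≤ 1 := fun i =>
    hσ1 ▸ hσmono ⟨0, hd⟩ i (by rw [Fin.le_def]; exact Nat.zero_le _)
  set c : ℕ → ℝ≥0∞ := fun n => μ (Bset σ n) - ν (Bset σ n) with hcdef
  set c' : ℕ → ℝ≥0∞ := fun n => ν (Bset σ n) - μ (Bset σ n) with hc'def
  have hcle : ∀ n, c n ≤ μ (Bset σ n) := fun n => tsub_le_self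
  have hc'le : ∀ n, c' n ≤ ν (Bset σ n) := fun n => tsub_le_self
  have hcne : ∀ n, c n ≠ ∞ := fun n => ((hcle n).trans_lt (measure_lt_top μ _)).ne
  have hc'ne : ∀ n, c' n ≠ ∞ := fun n => ((hc'le n).trans_lt (measure_lt_top ν _)).ne
  have hμ1 : ∑' n, μ (Bset σ n) = 1 := by
    rw [← measure_iUnion (Bset_disjoint σ hσpos) (measurableSet_Bset σ),
      iUnion_Bset σ hd hσpos hσmono, measure_univ]
  have hν1 : ∑' n, ν (Bset σ n) = 1 := by
    rw [← measure_iUnion (Bset_disjoint σ hσpos) (measurableSet_Bset σ),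
      iUnion_Bset σ hd hσpos hσmono, measure_univ]
  have hqm : q + (∑' n, min (μ (Bset σ n)) (ν (Bset σ n))) = 1 := by
    rw [hq, ← ENNReal.tsum_add, ← hμ1]
    refine tsum_congr fun n => ?_
    rcases le_total (ν (Bset σ n)) (μ (Bset σ n)) with h | h
    · rw [min_eq_right h, tsub_add_cancel_of_le h]
    · rw [min_eq_left h, tsub_eq_zero_of_le h, zero_add]
  have hq'm : (∑' n, c' n) + (∑' n, min (μ (Bset σ n)) (ν (Bset σ n))) = 1 := by
    simp only [hc'def]
    rw [← ENNReal.tsum_add, ← hν1]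
    refine tsum_congr fun n => ?_
    rcases le_total (μ (Bset σ n)) (ν (Bset σ n)) with h | h
    · rw [min_eq_left h, tsub_add_cancel_of_le h]
    · rw [min_eq_right h, tsub_eq_zero_of_le h, zero_add]
  have hmne : (∑' n, min (μ (Bset σ n)) (ν (Bset σ n))) ≠ ∞ := by
    intro h
    rw [h, add_top] at hqm
    exact ENNReal.top_ne_one hqm
  have hq' : (∑' n, c' n) = q := by
    have h2 := hqm.trans hq'm.symm
    rw [add_comm q, add_comm (∑' n, c' n)] at h2
    exact ((ENNReal.add_right_inj hmne).mp h2).symm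
  have hqle1 : q ≤ 1 := by rw [← hqm]; exact le_self_add
  have hqne : q ≠ ∞ := (lt_of_le_of_lt hqle1 ENNReal.one_lt_top).ne
  have hqtR : q.toReal ≠ 0 := (ENNReal.toReal_pos hqpos.ne' hqne).ne'
  set A : Measure (EuclideanSpace ℝ (Fin d)) := Measure.sum fun n =>
      (μ (Bset σ n) - ν (Bset σ n)) • ((μ (Bset σ n))⁻¹ • μ.restrict (Bset σ n)) with hAdef
  set B : Measure (EuclideanSpace ℝ (Fin d)) := Measure.sum fun n =>
      (ν (Bset σ n) - μ (Bset σ n)) • ((ν (Bset σ n))⁻¹ • ν.restrict (Bset σ n)) with hBdef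
  have ha_univ : A Set.univ = q := by
    rw [hq]; exact aux_univ σ μ c hcle
  have hb_univ : B Set.univ = q := by
    rw [← hq']; exact aux_univ σ ν c' hc'le
  haveI hsA : SFinite A := by rw [hAdef]; infer_instance
  haveI hsB : SFinite B := by rw [hBdef]; infer_instance
  have hfm : Measurable fun p : (EuclideanSpace ℝ (Fin d)) × (EuclideanSpace ℝ (Fin d)) =>
      ‖p.1 - p.2‖ ^ 2 := (measurable_fst.sub measurable_snd).norm.pow_const 2
  have hfm' : Measurable fun p : (EuclideanSpace ℝ (Fin d)) × (EuclideanSpace ℝ (Fin d)) =>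
      ENNReal.ofReal (‖p.1 - p.2‖ ^ 2) := hfm.ennreal_ofReal
  have hg1m : Measurable fun x : EuclideanSpace ℝ (Fin d) =>
      ENNReal.ofReal (2 * ‖x‖ ^ 2) := ((measurable_norm.pow_const 2).const_mul 2).ennreal_ofReal
  set e : ℕ → ℝ≥0∞ := fun n => ENNReal.ofReal (2 * d * 4 ^ n) with hedef
  set K : ℝ≥0∞ := ∑' n, (c n + c' n) * e n with hKdef
  have hKsplit : K = (∑' n, c n * e n) + (∑' n, c' n * e n) := by
    rw [hKdef, ← ENNReal.tsum_add]
    exact tsum_congr fun n => add_mul _ _ _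
  have hRHS0 : 0 ≤ 2 * (d:ℝ) * ∑' n : ℕ, (2:ℝ) ^ (2*n) *
      |(μ (Bset σ n)).toReal - (ν (Bset σ n)).toReal| :=
    mul_nonneg (by positivity) (tsum_nonneg fun n => mul_nonneg (by positivity) (abs_nonneg _))
  by_cases hK : K = ∞
  · have hor : (∑' n, c n * e n) = ∞ ∨ (∑' n, c' n * e n) = ∞ := by
      by_contra hcon
      push_neg at hcon
      rw [hKsplit] at hK
      exact (ENNReal.add_ne_top.mpr ⟨hcon.1, hcon.2⟩) hK
    have hL : ∫⁻ p, ENNReal.ofReal (‖p.1 - p.2‖ ^ 2) ∂(A.prod B) = ∞ := by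
      rcases hor with h | h
      · have hg1 : ∫⁻ x, ENNReal.ofReal (2 * ‖x‖ ^ 2) ∂A = ∞ := by
          rw [hAdef]; exact aux_lower σ hd hσpos hσmono μ c hcle hcne h
        have hin : ∀ y, ∫⁻ x, ENNReal.ofReal (‖x - y‖ ^ 2) ∂A = ∞ := by
          intro y
          by_contra hfin
          have hmx : Measurable fun x : EuclideanSpace ℝ (Fin d) =>
              ENNReal.ofReal (‖x - y‖ ^ 2) :=
            ((measurable_id.sub measurable_const).norm.pow_const 2).ennreal_ofReal
          have hle : ∫⁻ x, ENNReal.ofReal (2 * ‖x‖ ^ 2) ∂A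
              ≤ ENNReal.ofReal 4 * ∫⁻ x, ENNReal.ofReal (‖x - y‖ ^ 2) ∂A
                + ENNReal.ofReal (4 * ‖y‖ ^ 2) * q := by
            calc ∫⁻ x, ENNReal.ofReal (2 * ‖x‖ ^ 2) ∂A
                ≤ ∫⁻ x, (ENNReal.ofReal 4 * ENNReal.ofReal (‖x - y‖ ^ 2)
                    + ENNReal.ofReal (4 * ‖y‖ ^ 2)) ∂A := by
                  refine lintegral_mono fun x => ?_
                  rw [← ENNReal.ofReal_mul (by norm_num),
                    ← ENNReal.ofReal_add (by positivity) (by positivity)]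
                  refine ENNReal.ofReal_le_ofReal ?_
                  have hxy : ‖x‖ ≤ ‖x - y‖ + ‖y‖ := by
                    have h0 : ‖x - y + y‖ ≤ ‖x - y‖ + ‖y‖ := norm_add_le _ _
                    rwa [sub_add_cancel] at h0
                  nlinarith [norm_nonneg (x - y), norm_nonneg y, norm_nonneg x,
                    sq_nonneg (‖x - y‖ - ‖y‖)]
              _ = ENNReal.ofReal 4 * ∫⁻ x, ENNReal.ofReal (‖x - y‖ ^ 2) ∂A
                    + ENNReal.ofReal (4 * ‖y‖ ^ 2) * q := by
                  rw [lintegral_add_right _ measurable_const, lintegral_const_mul _ hmx,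
                    lintegral_const, ha_univ]
          rw [hg1] at hle
          exact (ENNReal.add_ne_top.mpr ⟨ENNReal.mul_ne_top ENNReal.ofReal_ne_top hfin,
            ENNReal.mul_ne_top ENNReal.ofReal_ne_top hqne⟩) (top_le_iff.mp hle)
        rw [lintegral_prod_symm _ hfm'.aemeasurable]
        rw [lintegral_congr fun y => hin y, lintegral_const, hb_univ]
        exact ENNReal.top_mul hqpos.ne'
      · have hg2 : ∫⁻ y, ENNReal.ofReal (2 * ‖y‖ ^ 2) ∂B = ∞ := by
          rw [hBdef]; exact aux_lower σ hd hσpos hσmono ν c' hc'le hc'ne h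
        have hin : ∀ x, ∫⁻ y, ENNReal.ofReal (‖x - y‖ ^ 2) ∂B = ∞ := by
          intro x
          by_contra hfin
          have hmy : Measurable fun y : EuclideanSpace ℝ (Fin d) =>
              ENNReal.ofReal (‖x - y‖ ^ 2) :=
            ((measurable_const.sub measurable_id).norm.pow_const 2).ennreal_ofReal
          have hle : ∫⁻ y, ENNReal.ofReal (2 * ‖y‖ ^ 2) ∂B
              ≤ ENNReal.ofReal 4 * ∫⁻ y, ENNReal.ofReal (‖x - y‖ ^ 2) ∂B
                + ENNReal.ofReal (4 * ‖x‖ ^ 2) * q := by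
            calc ∫⁻ y, ENNReal.ofReal (2 * ‖y‖ ^ 2) ∂B
                ≤ ∫⁻ y, (ENNReal.ofReal 4 * ENNReal.ofReal (‖x - y‖ ^ 2)
                    + ENNReal.ofReal (4 * ‖x‖ ^ 2)) ∂B := by
                  refine lintegral_mono fun y => ?_
                  rw [← ENNReal.ofReal_mul (by norm_num),
                    ← ENNReal.ofReal_add (by positivity) (by positivity)]
                  refine ENNReal.ofReal_le_ofReal ?_
                  have hxy : ‖y‖ ≤ ‖x - y‖ + ‖x‖ := by
                    have h0 : ‖x - (x - y)‖ ≤ ‖x‖ + ‖x - y‖ := norm_sub_le _ _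
                    rw [sub_sub_cancel] at h0
                    linarith
                  nlinarith [norm_nonneg (x - y), norm_nonneg y, norm_nonneg x,
                    sq_nonneg (‖x - y‖ - ‖x‖)]
              _ = ENNReal.ofReal 4 * ∫⁻ y, ENNReal.ofReal (‖x - y‖ ^ 2) ∂B
                    + ENNReal.ofReal (4 * ‖x‖ ^ 2) * q := by
                  rw [lintegral_add_right _ measurable_const, lintegral_const_mul _ hmy,
                    lintegral_const, hb_univ]
          rw [hg2] at hle
          exact (ENNReal.add_ne_top.mpr ⟨ENNReal.mul_ne_top ENNReal.ofReal_ne_top hfin,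
            ENNReal.mul_ne_top ENNReal.ofReal_ne_top hqne⟩) (top_le_iff.mp hle)
        rw [lintegral_prod _ hfm'.aemeasurable]
        rw [lintegral_congr fun x => hin x, lintegral_const, ha_univ]
        exact ENNReal.top_mul hqpos.ne'
    have hnInt : ¬ Integrable (fun p : (EuclideanSpace ℝ (Fin d)) × (EuclideanSpace ℝ (Fin d)) =>
        ‖p.1 - p.2‖ ^ 2) (A.prod B) := by
      intro hInt
      have hfi := (hasFiniteIntegral_iff_ofReal
        (Filter.Eventually.of_forall fun p => by positivity)).mp hInt.hasFiniteIntegral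
      exact absurd hL (ne_of_lt hfi)
    rw [integral_undef hnInt, mul_zero]
    exact hRHS0
  · have hub : ∫⁻ p, ENNReal.ofReal (‖p.1 - p.2‖ ^ 2) ∂(A.prod B) ≤ q * K := by
      calc ∫⁻ p, ENNReal.ofReal (‖p.1 - p.2‖ ^ 2) ∂(A.prod B)
          ≤ ∫⁻ p : (EuclideanSpace ℝ (Fin d)) × (EuclideanSpace ℝ (Fin d)),
              (ENNReal.ofReal (2 * ‖p.1‖ ^ 2) + ENNReal.ofReal (2 * ‖p.2‖ ^ 2)) ∂(A.prod B) := by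
            refine lintegral_mono fun p => ?_
            rw [← ENNReal.ofReal_add (by positivity) (by positivity)]
            refine ENNReal.ofReal_le_ofReal ?_
            nlinarith [norm_sub_le p.1 p.2, norm_nonneg p.1, norm_nonneg p.2,
              sq_nonneg (‖p.1‖ - ‖p.2‖), norm_nonneg (p.1 - p.2)]
        _ = ∫⁻ x, (ENNReal.ofReal (2 * ‖x‖ ^ 2) * B Set.univ
              + ∫⁻ y, ENNReal.ofReal (2 * ‖y‖ ^ 2) ∂B) ∂A := by
            rw [lintegral_prod (fun p => ENNReal.ofReal (2 * ‖p.1‖ ^ 2)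
                + ENNReal.ofReal (2 * ‖p.2‖ ^ 2))
              ((hg1m.comp measurable_fst).add (hg1m.comp measurable_snd)).aemeasurable]
            refine lintegral_congr fun x => ?_
            dsimp only
            rw [lintegral_add_left measurable_const, lintegral_const]
        _ = (∫⁻ x, ENNReal.ofReal (2 * ‖x‖ ^ 2) ∂A) * B Set.univ
              + (∫⁻ y, ENNReal.ofReal (2 * ‖y‖ ^ 2) ∂B) * A Set.univ := by
            rw [lintegral_add_right _ measurable_const, lintegral_mul_const _ hg1m,
              lintegral_const]
        _ ≤ (∑' n, c n * e n) * q + (∑' n, c' n * e n) * q := by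
            rw [ha_univ, hb_univ]
            refine add_le_add (mul_le_mul_left ?_ q) (mul_le_mul_left ?_ q)
            · rw [hAdef]; exact aux_upper σ hσle1 μ c
            · rw [hBdef]; exact aux_upper σ hσle1 ν c'
        _ = q * K := by rw [← add_mul, ← hKsplit, mul_comm]
    have hqKne : q * K ≠ ∞ := ENNReal.mul_ne_top hqne hK
    have hterm : ∀ n, ((c n + c' n) * e n).toReal
        = 2 * d * ((2:ℝ) ^ (2 * n) * |(μ (Bset σ n)).toReal - (ν (Bset σ n)).toReal|) := by
      intro n
      have hee : (e n).toReal = 2 * d * 4 ^ n := ENNReal.toReal_ofReal (by positivity)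
      have habs : (c n + c' n).toReal
          = |(μ (Bset σ n)).toReal - (ν (Bset σ n)).toReal| := by
        rcases le_total (ν (Bset σ n)) (μ (Bset σ n)) with h | h
        · have h1 : c' n = 0 := tsub_eq_zero_of_le h
          have h2 : (c n).toReal = (μ (Bset σ n)).toReal - (ν (Bset σ n)).toReal :=
            ENNReal.toReal_sub_of_le h (measure_ne_top μ _)
          rw [h1, add_zero, h2,
            abs_of_nonneg (sub_nonneg.mpr (ENNReal.toReal_mono (measure_ne_top μ _) h))]
        · have h1 : c n = 0 := tsub_eq_zero_of_le h
          have h2 : (c' n).toReal = (ν (Bset σ n)).toReal - (μ (Bset σ n)).toReal :=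
            ENNReal.toReal_sub_of_le h (measure_ne_top ν _)
          rw [h1, zero_add, h2,
            abs_of_nonpos (sub_nonpos.mpr (ENNReal.toReal_mono (measure_ne_top ν _) h))]
          ring
      rw [ENNReal.toReal_mul, habs, hee]
      have h4 : (2:ℝ) ^ (2 * n) = 4 ^ n := by rw [pow_mul]; norm_num
      rw [h4]; ring
    have hKto : K.toReal = 2 * d * ∑' n : ℕ, (2:ℝ) ^ (2*n) *
        |(μ (Bset σ n)).toReal - (ν (Bset σ n)).toReal| := by
      rw [hKdef, ENNReal.tsum_toReal_eq (fun n => ENNReal.mul_ne_top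
        (ENNReal.add_ne_top.mpr ⟨hcne n, hc'ne n⟩) ENNReal.ofReal_ne_top), ← tsum_mul_left]
      exact tsum_congr hterm
    by_cases hInt : Integrable (fun p : (EuclideanSpace ℝ (Fin d)) × (EuclideanSpace ℝ (Fin d)) =>
        ‖p.1 - p.2‖ ^ 2) (A.prod B)
    · rw [integral_eq_lintegral_of_nonneg_ae (Filter.Eventually.of_forall fun p => by positivity)
        hfm.aestronglyMeasurable]
      have h1 : (∫⁻ p, ENNReal.ofReal (‖p.1 - p.2‖ ^ 2) ∂(A.prod B)).toReal ≤ (q * K).toReal :=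
        ENNReal.toReal_mono hqKne hub
      calc q.toReal⁻¹ * (∫⁻ p, ENNReal.ofReal (‖p.1 - p.2‖ ^ 2) ∂(A.prod B)).toReal
          ≤ q.toReal⁻¹ * (q * K).toReal :=
            mul_le_mul_of_nonneg_left h1 (inv_nonneg.mpr ENNReal.toReal_nonneg)
        _ = K.toReal := by
            rw [ENNReal.toReal_mul, ← mul_assoc, inv_mul_cancel₀ hqtR, one_mul]
        _ = _ := hKto
    · rw [integral_undef hInt, mul_zero]
      exact hRHS0

/-- cost bound for the product remainder term of the glued coupling. -/
theorem stmt9 (d : ℕ) (hd : 0 < d) (σ : Fin d → ℝ)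
    (hσ1 : σ ⟨0, hd⟩ = 1) (hσmono : ∀ i j : Fin d, i ≤ j → σ j ≤ σ i)
    (hσpos : ∀ i, 0 < σ i)
    (μ ν : Measure (EuclideanSpace ℝ (Fin d)))
    [IsProbabilityMeasure μ] [IsProbabilityMeasure ν]
    (q : ℝ≥0∞) (hq : q = ∑' n, (μ (Bset σ n) - ν (Bset σ n))) (hqpos : 0 < q) :
    (let a : Measure (EuclideanSpace ℝ (Fin d)) :=
        Measure.sum fun n =>
          (μ (Bset σ n) - ν (Bset σ n)) • ((μ (Bset σ n))⁻¹ • μ.restrict (Bset σ n));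
      let b : Measure (EuclideanSpace ℝ (Fin d)) :=
        Measure.sum fun n =>
          (ν (Bset σ n) - μ (Bset σ n)) • ((ν (Bset σ n))⁻¹ • ν.restrict (Bset σ n));
      q.toReal⁻¹ * ∫ p, ‖p.1 - p.2‖ ^ 2 ∂(a.prod b) ≤
        2 * d * ∑' n : ℕ, (2 : ℝ) ^ (2 * n) *
          |(μ (Bset σ n)).toReal - (ν (Bset σ n)).toReal|) := by
  intro a b
  exact stmt9_aux d hd σ hσ1 hσmono hσpos μ ν q hq hqpos
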